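/- Let R be a finite valuation ring with parameters q, ℓ and χ the trivial multiplicative character. If ψ is a nontrivial additive character of R that is trivial on the maximal ideal (π), then Σ_{u ∈ R^×} ψ(u) = -q^{ℓ-1}; if ψ is nontrivial on (π), then Σ_{u ∈ R^×} ψ(u) = 0. -/

import Mathlib

open Finset

-- structure lemma: nonzero elements are unit * π^k
lemma exists_unit_pow {R : Type*} [CommRing R] [IsLocalRing R]
    {π : R} (hπ : IsLocalRing.maximalIdeal R = Ideal.span {π})
    {ℓ : ℕ} (hnil : π ^ ℓ = 0) {x : R} (hx : x ≠ 0) :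
    ∃ k, k < ℓ ∧ ∃ u : Rˣ, x = (u : R) * π ^ k := by
  classical
  set P : ℕ → Prop := fun m => π ^ m ∣ x with hP
  have hP0 : P 0 := by simp [hP]
  have hPl : ¬ P ℓ := by simp [hP, hnil, zero_dvd_iff, hx]
  set k := Nat.findGreatest P ℓ with hk
  have hkspec : P k := Nat.findGreatest_spec (Nat.zero_le ℓ) hP0
  have hkle : k ≤ ℓ := Nat.findGreatest_le ℓ
  have hklt : k < ℓ := lt_of_le_of_ne hkle (fun h => hPl (h ▸ hkspec))
  have hnotsucc : ¬ P (k + 1) :=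
    Nat.findGreatest_is_greatest (Nat.lt_succ_self k) hklt
  obtain ⟨y, hy⟩ := hkspec
  have hyunit : IsUnit y := by
    by_contra h
    have : y ∈ IsLocalRing.maximalIdeal R := h
    rw [hπ, Ideal.mem_span_singleton] at this
    obtain ⟨z, hz⟩ := this
    exact hnotsucc ⟨z, by rw [hy, hz, pow_succ]; ring⟩
  obtain ⟨u, rfl⟩ := hyunit
  exact ⟨k, hklt, u, by rw [hy]; ring⟩

lemma pow_pi_eq_zero_iff {R : Type*} [CommRing R] [Nontrivial R]
    {π : R} {ℓ : ℕ} (hnil : π ^ ℓ = 0) (hmin : ∀ m, 0 < m → m < ℓ → π ^ m ≠ 0)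
    (m : ℕ) : π ^ m = 0 ↔ ℓ ≤ m := by
  constructor
  · intro h
    by_contra hc
    push_neg at hc
    rcases Nat.eq_zero_or_pos m with rfl | hm
    · simp at h
    · exact hmin m hm hc h
  · intro h
    obtain ⟨j, rfl⟩ := Nat.exists_eq_add_of_le h
    rw [pow_add, hnil, zero_mul]

-- annihilator lemma
lemma ann_pow {R : Type*} [CommRing R] [IsLocalRing R]
    {π : R} (hπ : IsLocalRing.maximalIdeal R = Ideal.span {π})
    {ℓ : ℕ} (hnil : π ^ ℓ = 0) (hmin : ∀ m, 0 < m → m < ℓ → π ^ m ≠ 0)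
    {i : ℕ} (hi : i ≤ ℓ) (x : R) :
    π ^ i * x = 0 ↔ x ∈ Ideal.span {π ^ (ℓ - i)} := by
  constructor
  · intro h
    rcases eq_or_ne x 0 with rfl | hx
    · exact Ideal.zero_mem _
    obtain ⟨k, hk, u, rfl⟩ := exists_unit_pow hπ hnil hx
    have h2 : π ^ (i + k) = 0 := by
      have : (u : R) * π ^ (i + k) = 0 := by rw [pow_add]; linear_combination h
      exact (Units.mul_right_eq_zero u).mp this
    have hik : ℓ ≤ i + k := (pow_pi_eq_zero_iff hnil hmin _).mp h2
    rw [Ideal.mem_span_singleton]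
    have : ℓ - i ≤ k := by omega
    exact Dvd.dvd.mul_left (pow_dvd_pow π this) _
  · intro h
    rw [Ideal.mem_span_singleton] at h
    obtain ⟨y, rfl⟩ := h
    rw [← mul_assoc, ← pow_add]
    have : i + (ℓ - i) = ℓ := by omega
    rw [this, hnil, zero_mul]

lemma card_eq_range_ker {G H : Type*} [AddCommGroup G] [AddCommGroup H] (f : G →+ H) :
    Nat.card G = Nat.card f.range * Nat.card f.ker := by
  rw [AddSubgroup.card_eq_card_quotient_mul_card_addSubgroup f.ker]
  congr 1
  exact Nat.card_congr (QuotientAddGroup.quotientKerEquivRange f).toEquiv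

lemma card_span_eq {R : Type*} [CommRing R] [Fintype R] [IsLocalRing R]
    {π : R} (hπ : IsLocalRing.maximalIdeal R = Ideal.span {π})
    {q ℓ : ℕ} (hq : Nat.card (IsLocalRing.ResidueField R) = q)
    (hℓpos : 0 < ℓ) (hnil : π ^ ℓ = 0) (hmin : ∀ m, 0 < m → m < ℓ → π ^ m ≠ 0) :
    Nat.card (Ideal.span {π} : Ideal R) = q ^ (ℓ - 1) := by
  classical
  set N : ℕ → ℕ := fun i => Nat.card (Ideal.span {π ^ i} : Ideal R) with hN
  have key : ∀ i, i ≤ ℓ → Nat.card R = N i * N (ℓ - i) := by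
    intro i hi
    have h := card_eq_range_ker (AddMonoidHom.mulLeft (π ^ i) : R →+ R)
    have hrange : (AddMonoidHom.mulLeft (π ^ i) : R →+ R).range
        = (Ideal.span {π ^ i} : Ideal R).toAddSubgroup := by
      ext x
      simp only [AddMonoidHom.mem_range, AddMonoidHom.coe_mulLeft,
        Submodule.mem_toAddSubgroup, Ideal.mem_span_singleton]
      exact ⟨fun ⟨y, hy⟩ => ⟨y, hy.symm⟩, fun ⟨y, hy⟩ => ⟨y, hy.symm⟩⟩
    have hker : (AddMonoidHom.mulLeft (π ^ i) : R →+ R).ker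
        = (Ideal.span {π ^ (ℓ - i)} : Ideal R).toAddSubgroup := by
      ext x
      simp only [AddMonoidHom.mem_ker, AddMonoidHom.coe_mulLeft,
        Submodule.mem_toAddSubgroup]
      exact ann_pow hπ hnil hmin hi x
    rw [hrange, hker] at h
    exact h
  have hres : Nat.card R = q * N 1 := by
    have h := card_eq_range_ker (IsLocalRing.residue R).toAddMonoidHom
    have hrange : (IsLocalRing.residue R).toAddMonoidHom.range = ⊤ := by
      rw [AddMonoidHom.range_eq_top]
      exact IsLocalRing.residue_surjective
    have hker : (IsLocalRing.residue R).toAddMonoidHom.ker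
        = (Ideal.span {π ^ 1} : Ideal R).toAddSubgroup := by
      ext x
      simp only [AddMonoidHom.mem_ker, Submodule.mem_toAddSubgroup, pow_one, ← hπ]
      exact Ideal.Quotient.eq_zero_iff_mem
    rw [hrange, hker] at h
    rw [h]
    congr 1
    rw [← hq]
    exact Nat.card_congr AddSubgroup.topEquiv.toEquiv
  have hN1pos : 0 < N 1 := Nat.card_pos
  have hNl1 : N (ℓ - 1) = q := by
    have h1 := key (ℓ - 1) (by omega)
    rw [show ℓ - (ℓ - 1) = 1 by omega] at h1
    rw [hres] at h1
    exact (Nat.eq_of_mul_eq_mul_right hN1pos h1).symm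
  have ratio : ∀ i, i + 1 ≤ ℓ → N i = N (i + 1) * q := by
    intro i hi
    have hmem : ∀ x : R, x ∈ Ideal.span {π ^ i} → π * x ∈ Ideal.span {π ^ (i + 1)} := by
      intro x hx
      rw [Ideal.mem_span_singleton] at hx ⊢
      obtain ⟨y, rfl⟩ := hx
      exact ⟨y, by ring⟩
    let g : (Ideal.span {π ^ i} : Ideal R) →+ (Ideal.span {π ^ (i + 1)} : Ideal R) :=
      AddMonoidHom.mk' (fun x => ⟨π * x, hmem x x.2⟩)
        (by intro a b; ext; simp [mul_add])
    have hrange : g.range = ⊤ := by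
      rw [AddMonoidHom.range_eq_top]
      rintro ⟨z, hz⟩
      rw [Ideal.mem_span_singleton] at hz
      obtain ⟨y, rfl⟩ := hz
      refine ⟨⟨π ^ i * y, Ideal.mem_span_singleton.mpr ⟨y, rfl⟩⟩, ?_⟩
      ext
      show π * (π ^ i * y) = π ^ (i + 1) * y
      ring
    have hkereq : ∀ z : (Ideal.span {π ^ i} : Ideal R),
        z ∈ g.ker ↔ (z : R) ∈ Ideal.span {π ^ (ℓ - 1)} := by
      intro z
      rw [AddMonoidHom.mem_ker]
      have : g z = 0 ↔ π * (z : R) = 0 := by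
        constructor
        · intro h; exact congrArg Subtype.val h
        · intro h; ext; exact h
      rw [this]
      have h2 := ann_pow hπ hnil hmin (by omega : 1 ≤ ℓ) (z : R)
      rw [pow_one] at h2
      exact h2
    have hkercard : Nat.card g.ker = N (ℓ - 1) := by
      apply Nat.card_congr
      refine ⟨fun z => ⟨((z : (Ideal.span {π ^ i} : Ideal R)) : R), (hkereq _).mp z.2⟩,
        fun w => ⟨⟨(w : R), ?_⟩, ?_⟩, fun z => by ext; rfl, fun w => by ext; rfl⟩
      · rw [Ideal.mem_span_singleton]
        have hw := w.2
        rw [Ideal.mem_span_singleton] at hw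
        exact dvd_trans (pow_dvd_pow π (by omega : i ≤ ℓ - 1)) hw
      · rw [hkereq]
        exact w.2
    have h := card_eq_range_ker g
    rw [hrange, hkercard] at h
    simp only [hN]
    rw [h, hNl1]
    congr 1
    exact Nat.card_congr AddSubgroup.topEquiv.toEquiv
  have main : ∀ j, j ≤ ℓ → N (ℓ - j) = q ^ j := by
    intro j
    induction j with
    | zero =>
      intro _
      simp only [Nat.sub_zero, pow_zero, hN]
      rw [show Ideal.span {π ^ ℓ} = (⊥ : Ideal R) from
        Ideal.span_singleton_eq_bot.mpr hnil]
      exact Nat.card_eq_one_iff_unique.mpr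
        ⟨⟨fun a b => Subtype.ext (((Submodule.mem_bot R).mp a.2).trans
          ((Submodule.mem_bot R).mp b.2).symm)⟩, ⟨0⟩⟩
    | succ j ih =>
      intro h
      have hr := ratio (ℓ - (j + 1)) (by omega)
      rw [show ℓ - (j + 1) + 1 = ℓ - j by omega] at hr
      rw [hr, ih (by omega), pow_succ]
  have := main (ℓ - 1) (by omega)
  rw [show ℓ - (ℓ - 1) = 1 by omega] at this
  rw [← this, hN]
  simp

theorem gauss_sum_trivial_mult_char
    (R : Type*) [CommRing R] [Fintype R] [DecidableEq R] [IsLocalRing R]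
    [IsPrincipalIdealRing R]
    (π : R) (hπ : IsLocalRing.maximalIdeal R = Ideal.span {π})
    (q ℓ : ℕ) (hq : Nat.card (IsLocalRing.ResidueField R) = q)
    (hℓpos : 0 < ℓ) (hnil : π ^ ℓ = 0) (hmin : ∀ m, 0 < m → m < ℓ → π ^ m ≠ 0)
    (ψ : AddChar R ℂ) (hψ : ψ ≠ 1) :
    ((∀ x ∈ Ideal.span {π}, ψ x = 1) →
        ∑ u : Rˣ, ψ (u : R) = -((q : ℂ) ^ (ℓ - 1))) ∧
      ((∃ x ∈ Ideal.span {π}, ψ x ≠ 1) → ∑ u : Rˣ, ψ (u : R) = 0) := by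
  classical
  set I : Ideal R := Ideal.span {π} with hI
  -- the decomposition equiv
  have hbij : Function.Bijective (Sum.elim (fun u : Rˣ => (u : R)) (fun x : I => (x : R))) := by
    constructor
    · have hnotin : ∀ u : Rˣ, (u : R) ∉ I := by
        intro u hu
        have : (u : R) ∈ IsLocalRing.maximalIdeal R := by rw [hπ]; exact hu
        exact mem_nonunits_iff.mp ((IsLocalRing.mem_maximalIdeal _).mp this) u.isUnit
      rintro (u | x) (v | y) h
      · simp only [Sum.elim_inl] at h
        exact congrArg Sum.inl (Units.ext h)
      · simp only [Sum.elim_inl, Sum.elim_inr] at h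
        exact absurd (h ▸ y.2) (hnotin u)
      · simp only [Sum.elim_inl, Sum.elim_inr] at h
        exact absurd (h.symm ▸ x.2) (hnotin v)
      · simp only [Sum.elim_inr] at h
        exact congrArg Sum.inr (Subtype.ext h)
    · intro x
      by_cases hx : IsUnit x
      · exact ⟨Sum.inl hx.unit, rfl⟩
      · refine ⟨Sum.inr ⟨x, ?_⟩, rfl⟩
        exact hπ ▸ ((IsLocalRing.mem_maximalIdeal x).mpr (mem_nonunits_iff.mpr hx))
  have hsum0 : ∑ x : R, ψ x = 0 :=
    AddChar.sum_eq_zero_iff_ne_zero.mpr hψ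
  have hsplit : (∑ u : Rˣ, ψ (u : R)) + (∑ x : I, ψ (x : R)) = 0 := by
    rw [← hsum0, ← Equiv.sum_comp (Equiv.ofBijective _ hbij) (fun x => ψ x)]
    rw [Fintype.sum_sum_type]
    simp only [Equiv.ofBijective_apply, Sum.elim_inl, Sum.elim_inr]
  have hcard : Nat.card I = q ^ (ℓ - 1) := card_span_eq hπ hq hℓpos hnil hmin
  constructor
  · intro htriv
    have hT : (∑ x : I, ψ (x : R)) = (q : ℂ) ^ (ℓ - 1) := by
      have h1 : ∀ x : I, ψ (x : R) = 1 := fun x => htriv _ x.2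
      rw [Finset.sum_congr rfl (fun x _ => h1 x), Finset.sum_const]
      simp only [card_univ, nsmul_eq_mul, mul_one]
      rw [← Nat.card_eq_fintype_card, hcard]
      push_cast
      ring
    rw [hT] at hsplit
    linear_combination hsplit
  · intro ⟨x, hx, hxne⟩
    have hT : (∑ x : I, ψ (x : R)) = 0 := by
      have hnt : (ψ.compAddMonoidHom I.toAddSubgroup.subtype) ≠ 0 := by
        intro hc
        apply hxne
        have h2 := DFunLike.congr_fun hc (⟨x, hx⟩ : I)
        exact h2
      have h3 := AddChar.sum_eq_zero_iff_ne_zero.mpr hnt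
      exact h3
    rw [hT, add_zero] at hsplit
    exact hsplit
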